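/- Consider n data qubits at the black vertices (2i,2j) of a 2√n × 2√n region and any set T of n/2 disjoint control–target pairs among them. Assign to each pair (v,u) with v=(v_x,v_y), u=(u_x,u_y), the L-shaped operator path with key vertices v, (v_x,v_y−1), (u_x−1,v_y−1), (u_x−1,u_y), u. Then each such path shares an edge with at most 2(√n − 1) of the other paths. -/

import Mathlib

/-- The set of (undirected) grid edges of the L-shaped operator path with key
vertices `v, (v₁, v₂-1), (u₁-1, v₂-1), (u₁-1, u₂), u`: a vertical end edge at
the control `v`, a horizontal interior segment along row `v₂ - 1`, a vertical
interior segment along column `u₁ - 1`, and a horizontal end edge at the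
target `u`. -/
def LPathEdges (v u : ℕ × ℕ) : Set (Sym2 (ℕ × ℕ)) :=
  {s(v, (v.1, v.2 - 1))} ∪
    {e | ∃ x : ℕ, min v.1 (u.1 - 1) ≤ x ∧ x + 1 ≤ max v.1 (u.1 - 1) ∧
      e = s((x, v.2 - 1), (x + 1, v.2 - 1))} ∪
    {e | ∃ y : ℕ, min (v.2 - 1) u.2 ≤ y ∧ y + 1 ≤ max (v.2 - 1) u.2 ∧
      e = s((u.1 - 1, y), (u.1 - 1, y + 1))} ∪
    {s((u.1 - 1, u.2), u)}

lemma lpath_key {v u v' u' : ℕ × ℕ}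
    (h1 : v.1 % 2 = 0) (h2 : v.2 % 2 = 0) (h3 : u.1 % 2 = 0) (h4 : u.2 % 2 = 0)
    (h1' : v'.1 % 2 = 0) (h2' : v'.2 % 2 = 0) (h3' : u'.1 % 2 = 0) (h4' : u'.2 % 2 = 0)
    (hb : 2 ≤ v.2) (hc : 2 ≤ u.1) (hb' : 2 ≤ v'.2) (hc' : 2 ≤ u'.1)
    (h : (LPathEdges v u ∩ LPathEdges v' u').Nonempty) :
    v.2 = v'.2 ∨ u.1 = u'.1 := by
  obtain ⟨a, b⟩ := v
  obtain ⟨c, d⟩ := u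
  obtain ⟨a', b'⟩ := v'
  obtain ⟨c', d'⟩ := u'
  simp only at h1 h2 h3 h4 h1' h2' h3' h4' hb hc hb' hc' ⊢
  obtain ⟨e, he, he'⟩ := h
  simp only [LPathEdges, Set.mem_union, Set.mem_singleton_iff, Set.mem_setOf_eq] at he he'
  rcases he with (((rfl | ⟨x, hx1, hx2, rfl⟩) | ⟨y, hy1, hy2, rfl⟩) | rfl) <;>
    rcases he' with (((heq | ⟨x', hx1', hx2', heq⟩) | ⟨y', hy1', hy2', heq⟩) | heq) <;>
    · simp only [Sym2.eq_iff, Prod.mk.injEq] at heq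
      omega


/-- Consider `n` data qubits at the black vertices `(2i, 2j)`
of a `2√n × 2√n` region and a set `T` of `n/2` disjoint control–target pairs
among them.  Assigning to each pair the L-shaped operator path above, each such
path shares an edge with at most `2(√n - 1)` of the other paths. -/
theorem lpath_conflicts_bound (n m : ℕ) (hm : m * m = n)
    (T : Finset ((ℕ × ℕ) × (ℕ × ℕ)))
    (hcard : 2 * T.card = n)
    (hcoords : ∀ t ∈ T,
      (Even t.1.1 ∧ Even t.1.2 ∧ Even t.2.1 ∧ Even t.2.2) ∧
        t.1.1 ∈ Finset.Icc 2 (2 * m) ∧ t.1.2 ∈ Finset.Icc 2 (2 * m) ∧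
        t.2.1 ∈ Finset.Icc 2 (2 * m) ∧ t.2.2 ∈ Finset.Icc 2 (2 * m))
    (hself : ∀ t ∈ T, t.1 ≠ t.2)
    (hdisj : ∀ t ∈ T, ∀ t' ∈ T, t ≠ t' →
      t.1 ≠ t'.1 ∧ t.2 ≠ t'.2 ∧ t.1 ≠ t'.2 ∧ t.2 ≠ t'.1) :
    ∀ t ∈ T,
      {t' | t' ∈ T ∧ t' ≠ t ∧
        (LPathEdges t.1 t.2 ∩ LPathEdges t'.1 t'.2).Nonempty}.ncard ≤
        2 * (m - 1) := by
  intro t ht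
  classical
  -- extract coordinate facts, turning `Even` into `% 2 = 0` and `Icc` into bounds
  have coord : ∀ t' ∈ T,
      (t'.1.1 % 2 = 0 ∧ t'.1.2 % 2 = 0 ∧ t'.2.1 % 2 = 0 ∧ t'.2.2 % 2 = 0) ∧
        (2 ≤ t'.1.1 ∧ t'.1.1 ≤ 2 * m) ∧ (2 ≤ t'.1.2 ∧ t'.1.2 ≤ 2 * m) ∧
        (2 ≤ t'.2.1 ∧ t'.2.1 ≤ 2 * m) ∧ (2 ≤ t'.2.2 ∧ t'.2.2 ≤ 2 * m) := by
    intro t' ht'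
    obtain ⟨⟨e1, e2, e3, e4⟩, i1, i2, i3, i4⟩ := hcoords t' ht'
    rw [Nat.even_iff] at e1 e2 e3 e4
    rw [Finset.mem_Icc] at i1 i2 i3 i4
    exact ⟨⟨e1, e2, e3, e4⟩, i1, i2, i3, i4⟩
  set F1 : Finset ((ℕ × ℕ) × (ℕ × ℕ)) :=
    (T.erase t).filter (fun t' => t'.1.2 = t.1.2) with hF1
  set F2 : Finset ((ℕ × ℕ) × (ℕ × ℕ)) :=
    (T.erase t).filter (fun t' => t'.2.1 = t.2.1) with hF2
  have hsub : {t' | t' ∈ T ∧ t' ≠ t ∧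
      (LPathEdges t.1 t.2 ∩ LPathEdges t'.1 t'.2).Nonempty} ⊆ ↑(F1 ∪ F2) := by
    rintro t' ⟨ht', hne, hinter⟩
    obtain ⟨⟨e1, e2, e3, e4⟩, ⟨i1, _⟩, ⟨i2, _⟩, ⟨i3, _⟩, ⟨i4, _⟩⟩ := coord t ht
    obtain ⟨⟨f1, f2, f3, f4⟩, ⟨j1, _⟩, ⟨j2, _⟩, ⟨j3, _⟩, ⟨j4, _⟩⟩ := coord t' ht'
    have hkey := lpath_key e1 e2 e3 e4 f1 f2 f3 f4 i2 i3 j2 j3 hinter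
    simp only [Finset.coe_union, Set.mem_union, Finset.mem_coe, hF1, hF2,
      Finset.mem_filter, Finset.mem_erase]
    rcases hkey with h | h
    · exact Or.inl ⟨⟨hne, ht'⟩, h.symm⟩
    · exact Or.inr ⟨⟨hne, ht'⟩, h.symm⟩
  have hn1 : Set.ncard {t' | t' ∈ T ∧ t' ≠ t ∧
      (LPathEdges t.1 t.2 ∩ LPathEdges t'.1 t'.2).Nonempty} ≤ (F1 ∪ F2).card := by
    calc _ ≤ (↑(F1 ∪ F2) : Set _).ncard :=
          Set.ncard_le_ncard hsub (Finset.finite_toSet _)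
      _ = (F1 ∪ F2).card := Set.ncard_coe_finset _
  -- bound on F1
  have hb1 : F1.card ≤ m - 1 := by
    have : F1.card ≤ ((Finset.Icc 1 m).erase (t.1.1 / 2)).card := by
      apply Finset.card_le_card_of_injOn (fun t' => t'.1.1 / 2)
      · intro t' ht'
        simp only [hF1, Finset.mem_coe, Finset.mem_filter, Finset.mem_erase] at ht'
        obtain ⟨⟨hne, htT⟩, hrow⟩ := ht'
        obtain ⟨⟨f1, _, _, _⟩, ⟨j1, j1'⟩, _, _, _⟩ := coord t' htT
        obtain ⟨⟨e1, _, _, _⟩, ⟨i1, i1'⟩, _, _, _⟩ := coord t ht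
        have hne1 : t'.1 ≠ t.1 := (hdisj t' htT t ht hne).1
        have hxne : t'.1.1 ≠ t.1.1 := by
          intro hx
          exact hne1 (Prod.ext hx hrow)
        simp only [Finset.mem_coe, Finset.mem_erase, Finset.mem_Icc]
        omega
      · intro x hx y hy hxy
        simp only at hxy
        simp only [hF1, Finset.mem_coe, Finset.mem_filter, Finset.mem_erase] at hx hy
        obtain ⟨⟨hnex, hxT⟩, hrowx⟩ := hx
        obtain ⟨⟨hney, hyT⟩, hrowy⟩ := hy
        obtain ⟨⟨f1, _, _, _⟩, ⟨j1, _⟩, _, _, _⟩ := coord x hxT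
        obtain ⟨⟨g1, _, _, _⟩, ⟨k1, _⟩, _, _, _⟩ := coord y hyT
        have hx1 : x.1.1 = y.1.1 := by omega
        have hfst : x.1 = y.1 := Prod.ext hx1 (hrowx.trans hrowy.symm)
        by_contra hne
        exact (hdisj x hxT y hyT hne).1 hfst
    have hmem : t.1.1 / 2 ∈ Finset.Icc 1 m := by
      obtain ⟨⟨e1, _, _, _⟩, ⟨i1, i1'⟩, _, _, _⟩ := coord t ht
      simp only [Finset.mem_Icc]; omega
    rw [Finset.card_erase_of_mem hmem, Nat.card_Icc] at this
    omega
  -- bound on F2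
  have hb2 : F2.card ≤ m - 1 := by
    have : F2.card ≤ ((Finset.Icc 1 m).erase (t.2.2 / 2)).card := by
      apply Finset.card_le_card_of_injOn (fun t' => t'.2.2 / 2)
      · intro t' ht'
        simp only [hF2, Finset.mem_coe, Finset.mem_filter, Finset.mem_erase] at ht'
        obtain ⟨⟨hne, htT⟩, hcol⟩ := ht'
        obtain ⟨⟨_, _, _, f4⟩, _, _, _, ⟨j4, j4'⟩⟩ := coord t' htT
        obtain ⟨⟨_, _, _, e4⟩, _, _, _, ⟨i4, i4'⟩⟩ := coord t ht
        have hne2 : t'.2 ≠ t.2 := (hdisj t' htT t ht hne).2.1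
        have hxne : t'.2.2 ≠ t.2.2 := by
          intro hx
          exact hne2 (Prod.ext hcol hx)
        simp only [Finset.mem_coe, Finset.mem_erase, Finset.mem_Icc]
        omega
      · intro x hx y hy hxy
        simp only at hxy
        simp only [hF2, Finset.mem_coe, Finset.mem_filter, Finset.mem_erase] at hx hy
        obtain ⟨⟨hnex, hxT⟩, hcolx⟩ := hx
        obtain ⟨⟨hney, hyT⟩, hcoly⟩ := hy
        obtain ⟨⟨_, _, _, f4⟩, _, _, _, ⟨j4, _⟩⟩ := coord x hxT
        obtain ⟨⟨_, _, _, g4⟩, _, _, _, ⟨k4, _⟩⟩ := coord y hyT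
        have hx2 : x.2.2 = y.2.2 := by omega
        have hsnd : x.2 = y.2 := Prod.ext (hcolx.trans hcoly.symm) hx2
        by_contra hne
        exact (hdisj x hxT y hyT hne).2.1 hsnd
    have hmem : t.2.2 / 2 ∈ Finset.Icc 1 m := by
      obtain ⟨⟨_, _, _, e4⟩, _, _, _, ⟨i4, i4'⟩⟩ := coord t ht
      simp only [Finset.mem_Icc]; omega
    rw [Finset.card_erase_of_mem hmem, Nat.card_Icc] at this
    omega
  have := Finset.card_union_le F1 F2
  omega
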